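/- Let A and B be real n×n stable matrices with A − B of rank one. Then for every x ∈ [0,1] the convex combination (1−x)·A + x·B is invertible. -/

import Mathlib

open Matrix

/-- A real square matrix is *stable* if every eigenvalue (over ℂ) has negative real part. -/
def IsStable {n : ℕ} (A : Matrix (Fin n) (Fin n) ℝ) : Prop :=
  ∀ μ : ℂ, μ ∈ spectrum ℂ (A.map (algebraMap ℝ ℂ)) → μ.re < 0

open Polynomial in
private lemma mem_spectrum_of_root {n : ℕ} (M : Matrix (Fin n) (Fin n) ℂ) (μ : ℂ)
    (h : M.charpoly.eval μ = 0) : μ ∈ spectrum ℂ M := by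
  rw [spectrum.mem_iff]
  intro hU
  rw [Matrix.isUnit_iff_isUnit_det, isUnit_iff_ne_zero] at hU
  apply hU
  rw [← h, Matrix.charpoly, ← Polynomial.coe_evalRingHom, RingHom.map_det]
  congr 1
  ext i j
  by_cases hij : i = j
  · subst hij
    simp [charmatrix_apply_eq, Matrix.algebraMap_matrix_apply]
  · simp [charmatrix_apply_ne _ _ _ hij, Matrix.algebraMap_matrix_apply, hij]

open Polynomial in
private lemma charpoly_eval_zero_pos {n : ℕ} (A : Matrix (Fin n) (Fin n) ℝ)
    (hA : ∀ μ : ℂ, μ ∈ spectrum ℂ (A.map (algebraMap ℝ ℂ)) → μ.re < 0) :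
    0 < A.charpoly.eval 0 := by
  have hroot : ∀ t : ℝ, 0 ≤ t → A.charpoly.eval t ≠ 0 := by
    intro t ht h0
    have h1 : ((A.charpoly.map (algebraMap ℝ ℂ)).eval ((t : ℂ))) = 0 := by
      rw [Polynomial.eval_map, show ((t:ℂ)) = algebraMap ℝ ℂ t from rfl, Polynomial.eval₂_at_apply, h0, map_zero]
    have h2 : (A.map (algebraMap ℝ ℂ)).charpoly.eval (t : ℂ) = 0 := by
      rw [Matrix.charpoly_map]; exact h1
    have h3 := hA _ (mem_spectrum_of_root _ _ h2)
    simp only [Complex.ofReal_re] at h3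
    linarith
  set q := A.charpoly * (X + C 1) with hq
  have hq_monic : q.Monic := (Matrix.charpoly_monic A).mul (Polynomial.monic_X_add_C 1)
  have hqroot : ∀ t : ℝ, 0 ≤ t → q.eval t ≠ 0 := by
    intro t ht
    simp only [hq, eval_mul, eval_add, eval_X, eval_C, mul_ne_zero_iff]
    exact ⟨hroot t ht, by linarith⟩
  have hqdeg : 0 < q.degree := by
    have : q.natDegree = A.charpoly.natDegree + 1 := by
      rw [hq, Polynomial.natDegree_mul (Matrix.charpoly_monic A).ne_zero
        (Polynomial.X_add_C_ne_zero 1), Polynomial.natDegree_X_add_C]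
    have h2 : 0 < q.natDegree := by omega
    exact Polynomial.natDegree_pos_iff_degree_pos.mp h2
  have htend : Filter.Tendsto (fun t => q.eval t) Filter.atTop Filter.atTop :=
    Polynomial.tendsto_atTop_of_leadingCoeff_nonneg q hqdeg (by rw [hq_monic.leadingCoeff]; norm_num)
  obtain ⟨b, hb0, hb1⟩ :=
    ((Filter.eventually_ge_atTop (0 : ℝ)).and (Filter.tendsto_atTop.mp htend 1)).exists
  have hq0 : 0 < q.eval 0 := by
    by_contra hcon
    push_neg at hcon
    have hlt : q.eval 0 < 0 := lt_of_le_of_ne hcon (hqroot 0 le_rfl)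
    obtain ⟨c, hc, hc0⟩ := intermediate_value_Icc hb0 (q.continuous.continuousOn)
      (Set.mem_Icc.mpr ⟨le_of_lt hlt, by linarith⟩)
    exact hqroot c hc.1 hc0
  have : q.eval 0 = A.charpoly.eval 0 := by simp [hq]
  linarith

open Polynomial in
private lemma rank_one_decomp {n : ℕ} (C : Matrix (Fin n) (Fin n) ℝ) (h : C.rank = 1) :
    ∃ u v : Fin n → ℝ, ∀ i j, C i j = u i * v j := by
  have hspan : Module.finrank ℝ (Submodule.span ℝ (Set.range Cᵀ)) = 1 := by
    exact (Matrix.rank_eq_finrank_span_cols C).symm.trans h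
  obtain ⟨⟨u, hu_mem⟩, _, hspan'⟩ := finrank_eq_one_iff'.mp hspan
  choose c hc using fun j =>
    hspan' ⟨Cᵀ j, Submodule.subset_span (Set.mem_range_self j)⟩
  refine ⟨u, c, fun i j => ?_⟩
  have h1 := congrFun (congrArg Subtype.val (hc j)) i
  simpa [mul_comm] using h1.symm

open Polynomial in
private lemma neg_det_pos_of_stable {n : ℕ} (A : Matrix (Fin n) (Fin n) ℝ)
    (hA : ∀ μ : ℂ, μ ∈ spectrum ℂ (A.map (algebraMap ℝ ℂ)) → μ.re < 0) :
    0 < (-A).det := by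
  have h1 := Matrix.det_eq_sign_charpoly_coeff A
  have h2 : (-A).det = (-1) ^ n * A.det := by
    rw [Matrix.det_neg]; simp
  have h3 := charpoly_eval_zero_pos A hA
  rw [Polynomial.coeff_zero_eq_eval_zero, Fintype.card_fin] at h1
  have hsq : ((-1 : ℝ) ^ n) * ((-1 : ℝ) ^ n) = 1 := by
    rw [← pow_add]; exact (Even.add_self n).neg_one_pow
  rw [h2, h1, ← mul_assoc, hsq, one_mul]
  exact h3

open Polynomial in
private theorem convex_combination_invertible_aux {n : ℕ} (A B : Matrix (Fin n) (Fin n) ℝ)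
    (hA : ∀ μ : ℂ, μ ∈ spectrum ℂ (A.map (algebraMap ℝ ℂ)) → μ.re < 0)
    (hB : ∀ μ : ℂ, μ ∈ spectrum ℂ (B.map (algebraMap ℝ ℂ)) → μ.re < 0)
    (hrank : (A - B).rank = 1) :
    ∀ x : ℝ, 0 ≤ x → x ≤ 1 → IsUnit ((1 - x) • A + x • B) := by
  obtain ⟨u, v, huv⟩ := rank_one_decomp (A - B) hrank
  have hA0 : 0 < (-A).det := neg_det_pos_of_stable A hA
  have hB0 : 0 < (-B).det := neg_det_pos_of_stable B hB
  have hAunit : IsUnit (-A).det := isUnit_iff_ne_zero.mpr (ne_of_gt hA0)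
  set s : ℝ := (Matrix.replicateRow Unit v * (-A)⁻¹ * Matrix.replicateCol Unit u) () () with hs
  have key : ∀ x : ℝ, (-A + x • (A - B)).det = (-A).det * (1 + x * s) := by
    intro x
    have hx1 : -A + x • (A - B) = -A + Matrix.replicateCol Unit (x • u) * Matrix.replicateRow Unit v := by
      ext i j
      simp only [Matrix.add_apply, Matrix.neg_apply, Matrix.smul_apply, Matrix.mul_apply,
        Matrix.replicateCol_apply, Matrix.replicateRow_apply, Pi.smul_apply, smul_eq_mul, Finset.univ_unique,
        Finset.sum_singleton, Matrix.sub_apply, huv i j]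
      ring
    rw [hx1, Matrix.det_add_replicateCol_mul_replicateRow hAunit,
      Matrix.det_unique (1 + Matrix.replicateRow Unit v * (-A)⁻¹ * Matrix.replicateCol Unit (x • u))]
    congr 1
    simp only [Matrix.add_apply, Matrix.one_apply_eq]
    congr 1
    rw [hs]
    simp only [Matrix.mul_apply, Matrix.replicateCol_apply, Matrix.replicateRow_apply, Pi.smul_apply,
      smul_eq_mul, Finset.mul_sum]
    apply Finset.sum_congr rfl
    intro k _
    ring
  intro x hx0 hx1
  have h1s : 0 < 1 + s := by
    have hk := key 1
    have : -A + (1 : ℝ) • (A - B) = -B := by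
      ext i j; simp; ring
    rw [this] at hk
    by_contra hcon
    push_neg at hcon
    nlinarith
  have hdetpos : 0 < (-A + x • (A - B)).det := by
    have expand : (-A).det * (1 + x * s) = (1 - x) * (-A).det + x * ((-A).det * (1 + s)) := by
      ring
    rw [key x, expand]
    rcases lt_or_eq_of_le hx0 with h | h
    · exact add_pos_of_nonneg_of_pos (mul_nonneg (by linarith) hA0.le)
        (mul_pos h (mul_pos hA0 h1s))
    · rw [← h]
      simpa using hA0
  have hneg : -((1 - x) • A + x • B) = -A + x • (A - B) := by
    ext i j; simp; ring
  have hdet : ((1 - x) • A + x • B).det ≠ 0 := by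
    intro h0
    have : (-((1 - x) • A + x • B)).det = 0 := by
      rw [Matrix.det_neg, h0, mul_zero]
    rw [hneg] at this
    linarith [hdetpos, this]
    
  exact (Matrix.isUnit_iff_isUnit_det _).mpr (isUnit_iff_ne_zero.mpr hdet)


/-- For stable `A`, `B` with `A - B` of rank one, every convex combination
`(1−x)·A + x·B` for `x ∈ [0,1]` is invertible. -/
theorem convex_combination_invertible {n : ℕ} (A B : Matrix (Fin n) (Fin n) ℝ)
    (hA : IsStable A) (hB : IsStable B) (hrank : (A - B).rank = 1) :
    ∀ x : ℝ, 0 ≤ x → x ≤ 1 → IsUnit ((1 - x) • A + x • B) :=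
  convex_combination_invertible_aux A B hA hB hrank
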